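/- Lemma 4 (CPO performance-difference bound, finite-state version). Let a finite Markov decision process with discount factor γ ∈ [0,1) be given, let f : S × A × S → ℝ, and let π and π' be stationary policies such that for every s ∈ S and a ∈ A, π(a|s) = 0 implies π'(a|s) = 0. Define δ = Σ_{s} d^π(s) · D_KL(π'(·|s) ‖ π(·|s)), where D_KL(p‖q) = Σ_{a : p(a) > 0} p(a)·log(p(a)/q(a)), and define ε = max_{s∈S} |Σ_{a} π'(a|s) · A_f^π(s,a)|. Then J_f(π') − J_f(π) ≤ (1/(1−γ)) · ( Σ_{s} d^π(s) · Σ_{a} π'(a|s) · A_f^π(s,a) + γ·ε·√(2δ)/(1−γ) ) and J_f(π') − J_f(π) ≥ (1/(1−γ)) · ( Σ_{s} d^π(s) · Σ_{a} π'(a|s) · A_f^π(s,a) − γ·ε·√(2δ)/(1−γ) ). -/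

import Mathlib

open Finset

/-- A finite Markov decision process. -/
structure MDP (S A : Type) [Fintype S] [Fintype A] where
  P : S → A → S → ℝ
  P_nonneg : ∀ s a s', 0 ≤ P s a s'
  P_sum : ∀ s a, ∑ s', P s a s' = 1
  μ : S → ℝ
  μ_nonneg : ∀ s, 0 ≤ μ s
  μ_sum : ∑ s, μ s = 1
  γ : ℝ
  γ_nonneg : 0 ≤ γ
  γ_lt_one : γ < 1

/-- A stationary policy: a probability distribution over actions for each state. -/
def IsPolicy {S A : Type} [Fintype S] [Fintype A] (π : S → A → ℝ) : Prop :=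
  (∀ s a, 0 ≤ π s a) ∧ (∀ s, ∑ a, π s a = 1)

/-- The time-`t` state distribution `μ_t^π`. -/
def stateDist {S A : Type} [Fintype S] [Fintype A] (M : MDP S A) (π : S → A → ℝ) :
    ℕ → S → ℝ
  | 0 => M.μ
  | (t + 1) => fun s' => ∑ s, ∑ a, stateDist M π t s * π s a * M.P s a s'

/-- The expected discounted return `J_f(π)`. -/
noncomputable def Jret {S A : Type} [Fintype S] [Fintype A] (M : MDP S A)
    (π : S → A → ℝ) (f : S → A → S → ℝ) : ℝ :=
  ∑' t : ℕ, M.γ ^ t * ∑ s, ∑ a, ∑ s', stateDist M π t s * π s a * M.P s a s' * f s a s'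

/-- The discounted future state distribution `d^π`. -/
noncomputable def dDist {S A : Type} [Fintype S] [Fintype A] (M : MDP S A)
    (π : S → A → ℝ) (s : S) : ℝ :=
  (1 - M.γ) * ∑' t : ℕ, M.γ ^ t * stateDist M π t s

/-- `V` satisfies the Bellman equation for `f` under policy `π`. -/
def IsValue {S A : Type} [Fintype S] [Fintype A] (M : MDP S A) (π : S → A → ℝ)
    (f : S → A → S → ℝ) (V : S → ℝ) : Prop :=
  ∀ s, V s = ∑ a, π s a * ∑ s', M.P s a s' * (f s a s' + M.γ * V s')

/-- The advantage function `A_f^π` built from a value function `V`. -/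
def adv {S A : Type} [Fintype S] [Fintype A] (M : MDP S A)
    (f : S → A → S → ℝ) (V : S → ℝ) (s : S) (a : A) : ℝ :=
  (∑ s', M.P s a s' * (f s a s' + M.γ * V s')) - V s
/-- Kullback–Leibler divergence between probability distributions on a finite set. -/
noncomputable def klDiv {A : Type} [Fintype A] (p q : A → ℝ) : ℝ :=
  ∑ a, if 0 < p a then p a * Real.log (p a / q a) else 0

section Basic
variable {S A : Type} [Fintype S] [Fintype A]

lemma stateDist_nonneg (M : MDP S A) {π : S → A → ℝ} (hπ : IsPolicy π) :
    ∀ t s, 0 ≤ stateDist M π t s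
  | 0, s => M.μ_nonneg s
  | (t+1), s' => by
    apply Finset.sum_nonneg; intro s _
    apply Finset.sum_nonneg; intro a _
    exact mul_nonneg (mul_nonneg (stateDist_nonneg M hπ t s) (hπ.1 s a)) (M.P_nonneg s a s')

lemma stateDist_sum (M : MDP S A) {π : S → A → ℝ} (hπ : IsPolicy π) :
    ∀ t, ∑ s, stateDist M π t s = 1
  | 0 => M.μ_sum
  | (t+1) => by
    show ∑ s', ∑ s, ∑ a, stateDist M π t s * π s a * M.P s a s' = 1
    rw [Finset.sum_comm]
    have : ∀ s ∈ (univ : Finset S), ∑ s', ∑ a, stateDist M π t s * π s a * M.P s a s'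
        = stateDist M π t s := by
      intro s _
      rw [Finset.sum_comm]
      have : ∀ a ∈ (univ : Finset A), ∑ s', stateDist M π t s * π s a * M.P s a s'
          = stateDist M π t s * π s a := by
        intro a _
        rw [← Finset.mul_sum, M.P_sum, mul_one]
      rw [Finset.sum_congr rfl this, ← Finset.mul_sum, hπ.2, mul_one]
    rw [Finset.sum_congr rfl this]
    exact stateDist_sum M hπ t

lemma stateDist_le_one (M : MDP S A) {π : S → A → ℝ} (hπ : IsPolicy π) (t : ℕ) (s : S) :
    stateDist M π t s ≤ 1 := by
  rw [← stateDist_sum M hπ t]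
  exact Finset.single_le_sum (fun i _ => stateDist_nonneg M hπ t i) (mem_univ s)

lemma summable_geom_mul (M : MDP S A) {c : ℕ → ℝ} {C : ℝ} (hc : ∀ t, |c t| ≤ C) :
    Summable (fun t => M.γ ^ t * c t) := by
  apply Summable.of_norm_bounded (g := fun t => C * M.γ ^ t)
    ((summable_geometric_of_lt_one M.γ_nonneg M.γ_lt_one).mul_left C)
  intro t
  rw [norm_mul, norm_pow, Real.norm_eq_abs, Real.norm_eq_abs, abs_of_nonneg M.γ_nonneg,
    mul_comm]
  exact mul_le_mul_of_nonneg_right (hc t) (pow_nonneg M.γ_nonneg t)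

lemma stateDist_weight_bound (M : MDP S A) {π : S → A → ℝ} (hπ : IsPolicy π)
    (t : ℕ) (g : S → ℝ) :
    |∑ s, stateDist M π t s * g s| ≤ ∑ s, |g s| := by
  calc |∑ s, stateDist M π t s * g s| ≤ ∑ s, |stateDist M π t s * g s| :=
        Finset.abs_sum_le_sum_abs _ _
    _ ≤ ∑ s, |g s| := by
        apply Finset.sum_le_sum
        intro s _
        rw [abs_mul, abs_of_nonneg (stateDist_nonneg M hπ t s)]
        calc stateDist M π t s * |g s| ≤ 1 * |g s| :=
              mul_le_mul_of_nonneg_right (stateDist_le_one M hπ t s) (abs_nonneg _)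
          _ = |g s| := one_mul _

lemma summable_stateDist_weight (M : MDP S A) {π : S → A → ℝ} (hπ : IsPolicy π)
    (g : S → ℝ) :
    Summable (fun t => M.γ ^ t * ∑ s, stateDist M π t s * g s) :=
  summable_geom_mul M (fun t => stateDist_weight_bound M hπ t g)

lemma one_sub_γ_pos (M : MDP S A) : 0 < 1 - M.γ := by
  have := M.γ_lt_one; linarith

/-- exchange tsum over t with sum over s, expressed via dDist -/
lemma tsum_dDist_eq (M : MDP S A) {π : S → A → ℝ} (hπ : IsPolicy π) (g : S → ℝ) :
    ∑' t : ℕ, M.γ ^ t * ∑ s, stateDist M π t s * g s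
      = (1 / (1 - M.γ)) * ∑ s, dDist M π s * g s := by
  have hsumm : ∀ s : S, Summable (fun t => M.γ ^ t * (stateDist M π t s * g s)) := by
    intro s
    apply summable_geom_mul M (C := |g s|)
    intro t
    rw [abs_mul, abs_of_nonneg (stateDist_nonneg M hπ t s)]
    calc stateDist M π t s * |g s| ≤ 1 * |g s| :=
          mul_le_mul_of_nonneg_right (stateDist_le_one M hπ t s) (abs_nonneg _)
      _ = |g s| := one_mul _
  have h1 : ∀ t : ℕ, M.γ ^ t * ∑ s, stateDist M π t s * g s
      = ∑ s, M.γ ^ t * (stateDist M π t s * g s) := fun t => Finset.mul_sum _ _ _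
  rw [tsum_congr h1, Summable.tsum_finsetSum (fun s _ => hsumm s)]
  rw [Finset.mul_sum]
  apply Finset.sum_congr rfl
  intro s _
  have h2 : ∀ t : ℕ, M.γ ^ t * (stateDist M π t s * g s)
      = (M.γ ^ t * stateDist M π t s) * g s := fun t => by ring
  rw [tsum_congr h2, tsum_mul_right, dDist]
  have hne : (1 : ℝ) - M.γ ≠ 0 := ne_of_gt (one_sub_γ_pos M)
  field_simp

lemma dDist_nonneg (M : MDP S A) {π : S → A → ℝ} (hπ : IsPolicy π) (s : S) :
    0 ≤ dDist M π s := by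
  apply mul_nonneg (le_of_lt (one_sub_γ_pos M))
  apply tsum_nonneg
  intro t
  exact mul_nonneg (pow_nonneg M.γ_nonneg t) (stateDist_nonneg M hπ t s)

lemma dDist_sum (M : MDP S A) {π : S → A → ℝ} (hπ : IsPolicy π) :
    ∑ s, dDist M π s = 1 := by
  have h := tsum_dDist_eq M hπ (fun _ => 1)
  simp only [mul_one] at h
  rw [tsum_congr (fun t => by
    rw [stateDist_sum M hπ t, mul_one] : ∀ t : ℕ,
      M.γ ^ t * ∑ s, stateDist M π t s = M.γ ^ t)] at h
  rw [tsum_geometric_of_lt_one M.γ_nonneg M.γ_lt_one] at h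
  have hne : (1 : ℝ) - M.γ ≠ 0 := ne_of_gt (one_sub_γ_pos M)
  field_simp at h
  linarith [h]

end Basic
section Scalar
open Real Set


private noncomputable def hfun (x : ℝ) : ℝ := x * Real.log x - x + 1 - 3*(x-1)^2/(2*(x+2))
private noncomputable def h1fun (x : ℝ) : ℝ := Real.log x - 3*(x-1)*(x+5)/(2*(x+2)^2)

private lemma hasDerivAt_hfun {x : ℝ} (hx : 0 < x) : HasDerivAt hfun (h1fun x) x := by
  have hx2 : (2:ℝ)*(x+2) ≠ 0 := by positivity
  have hnum : HasDerivAt (fun x : ℝ => 3*(x-1)^2) (3*(2*(x-1))) x := by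
    have := ((hasDerivAt_id x).sub_const 1).pow 2
    simpa using this.const_mul 3
  have hden : HasDerivAt (fun x : ℝ => 2*(x+2)) 2 x := by
    simpa using ((hasDerivAt_id x).add_const 2).const_mul 2
  have hfrac := hnum.div hden hx2
  have hml := Real.hasDerivAt_mul_log (ne_of_gt hx)
  have h := (hml.sub (hasDerivAt_id x)).add_const 1 |>.sub hfrac
  refine h.congr_deriv ?_
  simp only [h1fun]
  field_simp
  ring

private lemma hasDerivAt_h1fun {x : ℝ} (hx : 0 < x) :
    HasDerivAt h1fun (1/x - 27/(x+2)^3) x := by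
  have hx2 : (2:ℝ)*(x+2)^2 ≠ 0 := by positivity
  have hnum := (((hasDerivAt_id x).sub_const 1).const_mul 3).mul ((hasDerivAt_id x).add_const 5)
  have hden := (((hasDerivAt_id x).add_const 2).pow 2).const_mul 2
  have hfrac := hnum.div hden hx2
  have h := (Real.hasDerivAt_log (ne_of_gt hx)).sub hfrac
  refine h.congr_deriv ?_
  have hx2' : x + 2 ≠ 0 := by positivity
  simp only [id, Pi.pow_apply, Pi.mul_apply, Nat.cast_ofNat]
  field_simp
  ring

private lemma h1fun_mono : MonotoneOn h1fun (Ioi (0:ℝ)) := by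
  apply monotoneOn_of_deriv_nonneg (convex_Ioi 0)
  · intro x hx
    exact ((hasDerivAt_h1fun hx).differentiableAt).continuousAt.continuousWithinAt
  · intro x hx
    rw [interior_Ioi] at hx
    exact (hasDerivAt_h1fun hx).differentiableAt.differentiableWithinAt
  · intro x hx
    rw [interior_Ioi, Set.mem_Ioi] at hx
    rw [(hasDerivAt_h1fun hx).deriv]
    have hx2 : (0:ℝ) < x + 2 := by linarith
    rw [sub_nonneg, div_le_div_iff₀ (pow_pos hx2 3) hx]
    nlinarith [sq_nonneg (x-1), hx.le]

private lemma h1fun_one : h1fun 1 = 0 := by simp [h1fun]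

private lemma hfun_one : hfun 1 = 0 := by norm_num [hfun]

private lemma hfun_nonneg {x : ℝ} (hx : 0 < x) : 0 ≤ hfun x := by
  rcases le_total 1 x with h1 | h1
  · have hmono : MonotoneOn hfun (Ici (1:ℝ)) := by
      apply monotoneOn_of_deriv_nonneg (convex_Ici 1)
      · intro y hy
        have : (0:ℝ) < y := lt_of_lt_of_le one_pos hy
        exact ((hasDerivAt_hfun this).differentiableAt).continuousAt.continuousWithinAt
      · intro y hy
        rw [interior_Ici] at hy
        have : (0:ℝ) < y := lt_trans one_pos hy
        exact (hasDerivAt_hfun this).differentiableAt.differentiableWithinAt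
      · intro y hy
        rw [interior_Ici] at hy
        have hy0 : (0:ℝ) < y := lt_trans one_pos hy
        rw [(hasDerivAt_hfun hy0).deriv]
        have := h1fun_mono (Set.mem_Ioi.2 one_pos) (Set.mem_Ioi.2 hy0) hy.le
        rw [h1fun_one] at this; exact this
    have := hmono (Set.mem_Ici.2 le_rfl) (Set.mem_Ici.2 h1) h1
    rwa [hfun_one] at this
  · have hanti : AntitoneOn hfun (Ioc (0:ℝ) 1) := by
      apply antitoneOn_of_deriv_nonpos (convex_Ioc 0 1)
      · intro y hy
        exact ((hasDerivAt_hfun hy.1).differentiableAt).continuousAt.continuousWithinAt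
      · intro y hy
        rw [interior_Ioc] at hy
        exact (hasDerivAt_hfun hy.1).differentiableAt.differentiableWithinAt
      · intro y hy
        rw [interior_Ioc] at hy
        rw [(hasDerivAt_hfun hy.1).deriv]
        have := h1fun_mono (Set.mem_Ioi.2 hy.1) (Set.mem_Ioi.2 one_pos) hy.2.le
        rw [h1fun_one] at this; exact this
    have := hanti (Set.mem_Ioc.2 ⟨hx, h1⟩) (Set.mem_Ioc.2 ⟨one_pos, le_rfl⟩) h1
    rwa [hfun_one] at this

/-- scalar Pinsker-type inequality -/
lemma scalar_pinsker {x : ℝ} (hx : 0 < x) :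
    3*(x-1)^2/(2*(x+2)) ≤ x * Real.log x - x + 1 := by
  have := hfun_nonneg hx
  simp only [hfun] at this
  linarith

end Scalar
lemma pointwise_pinsker {p q : ℝ} (hp : 0 ≤ p) (hq : 0 ≤ q) (h : 0 < p → 0 < q) :
    3*(p-q)^2/(2*(p+2*q)) ≤ (if 0 < p then p * Real.log (p/q) else 0) - p + q := by
  rcases lt_or_eq_of_le hp with hp0 | hp0
  · have hq0 := h hp0
    rw [if_pos hp0]
    have hx : 0 < p / q := div_pos hp0 hq0
    have key := mul_le_mul_of_nonneg_right (scalar_pinsker hx) hq0.le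
    have e2 : 3*(p/q-1)^2/(2*(p/q+2)) * q = 3*(p-q)^2/(2*(p+2*q)) := by
      have h1 : p + 2*q ≠ 0 := by positivity
      field_simp
    have e1 : (p / q * Real.log (p/q) - p/q + 1) * q = p * Real.log (p/q) - p + q := by
      field_simp
    rw [e2, e1] at key
    exact key
  · rw [if_neg (by rw [← hp0]; exact lt_irrefl 0), ← hp0]
    rcases lt_or_eq_of_le hq with hq0 | hq0
    · rw [div_le_iff₀ (by positivity)]
      nlinarith
    · rw [← hq0]; norm_num

lemma pinsker_fin {A : Type} [Fintype A] (p q : A → ℝ) (hp : ∀ a, 0 ≤ p a)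
    (hq : ∀ a, 0 ≤ q a) (hsp : ∑ a, p a = 1) (hsq : ∑ a, q a = 1)
    (habs : ∀ a, q a = 0 → p a = 0) :
    0 ≤ klDiv p q ∧ ∑ a, |p a - q a| ≤ Real.sqrt (2 * klDiv p q) := by
  set B := ∑ a, 3*(p a - q a)^2/(2*(p a + 2*q a)) with hB
  have hBnonneg : 0 ≤ B := by
    apply Finset.sum_nonneg
    intro a _
    have : (0:ℝ) ≤ p a + 2 * q a := by have := hp a; have := hq a; linarith
    positivity
  have hstep1 : B ≤ klDiv p q := by
    have : ∀ a ∈ (univ : Finset A),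
        3*(p a - q a)^2/(2*(p a + 2*q a)) + (p a - q a)
          ≤ (if 0 < p a then p a * Real.log (p a / q a) else 0) := by
      intro a _
      have h := pointwise_pinsker (hp a) (hq a) (fun hpa => by
        rcases lt_or_eq_of_le (hq a) with h | h
        · exact h
        · exact absurd (habs a h.symm) (ne_of_gt hpa))
      linarith
    have hsum := Finset.sum_le_sum this
    rw [Finset.sum_add_distrib, Finset.sum_sub_distrib, hsp, hsq] at hsum
    simpa [klDiv] using hsum
  -- Cauchy-Schwarz
  set w : A → ℝ := fun a => 2*(p a + 2*q a)/3 with hw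
  have hwnonneg : ∀ a, 0 ≤ w a := by
    intro a; have := hp a; have := hq a
    simp only [hw]; positivity
  have hcs := Real.sum_mul_le_sqrt_mul_sqrt (univ : Finset A)
    (fun a => |p a - q a| / Real.sqrt (w a)) (fun a => Real.sqrt (w a))
  have hfg : ∀ a ∈ (univ : Finset A),
      |p a - q a| / Real.sqrt (w a) * Real.sqrt (w a) = |p a - q a| := by
    intro a _
    rcases lt_or_eq_of_le (hwnonneg a) with h | h
    · rw [div_mul_cancel₀]
      exact ne_of_gt (Real.sqrt_pos.2 h)
    · have hpa : p a = 0 := by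
        have := hp a; have := hq a
        simp only [hw] at h; nlinarith [h.symm]
      have hqa : q a = 0 := by
        have := hp a; have := hq a
        simp only [hw] at h; nlinarith [h.symm]
      simp [hpa, hqa]
  rw [Finset.sum_congr rfl hfg] at hcs
  have hf2 : ∑ a, (|p a - q a| / Real.sqrt (w a))^2 = B := by
    apply Finset.sum_congr rfl
    intro a _
    rw [div_pow, sq_abs, Real.sq_sqrt (hwnonneg a)]
    simp only [hw, hB]
    rw [div_div_eq_mul_div]
    ring
  have hg2 : ∑ a, (Real.sqrt (w a))^2 = 2 := by
    have : ∀ a ∈ (univ : Finset A), (Real.sqrt (w a))^2 = w a := by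
      intro a _; exact Real.sq_sqrt (hwnonneg a)
    rw [Finset.sum_congr rfl this]
    simp only [hw]
    rw [← Finset.sum_div, Finset.sum_congr rfl (fun a _ => by ring :
      ∀ a ∈ (univ : Finset A), 2*(p a + 2*q a) = 2 * p a + 4 * q a)]
    rw [Finset.sum_add_distrib, ← Finset.mul_sum, ← Finset.mul_sum, hsp, hsq]
    norm_num
  rw [hf2, hg2] at hcs
  refine ⟨hBnonneg.trans hstep1, ?_⟩
  calc ∑ a, |p a - q a| ≤ Real.sqrt B * Real.sqrt 2 := hcs
    _ = Real.sqrt (2 * B) := by rw [← Real.sqrt_mul hBnonneg, mul_comm]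
    _ ≤ Real.sqrt (2 * klDiv p q) := by
        apply Real.sqrt_le_sqrt; linarith
section PD
variable {S A : Type} [Fintype S] [Fintype A]

/-- per-step identity -/
lemma step_identity (M : MDP S A) {ρ : S → A → ℝ} (hρ : IsPolicy ρ)
    (f : S → A → S → ℝ) (V : S → ℝ) (t : ℕ) :
    (∑ s, ∑ a, ∑ s', stateDist M ρ t s * ρ s a * M.P s a s' * f s a s')
      = (∑ s, stateDist M ρ t s * ∑ a, ρ s a * adv M f V s a)
        + (∑ s, stateDist M ρ t s * V s)
        - M.γ * ∑ s', stateDist M ρ (t+1) s' * V s' := by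
  have e1 : ∀ s, ∑ a, ρ s a * adv M f V s a
      = (∑ a, ∑ s', ρ s a * (M.P s a s' * (f s a s' + M.γ * V s'))) - V s := by
    intro s
    simp only [adv, mul_sub, Finset.sum_sub_distrib, Finset.mul_sum]
    rw [← Finset.sum_mul, hρ.2 s, one_mul]
  have e2 : ∑ s', stateDist M ρ (t+1) s' * V s'
      = ∑ s, ∑ a, ∑ s', stateDist M ρ t s * ρ s a * M.P s a s' * V s' := by
    show ∑ s', (∑ s, ∑ a, stateDist M ρ t s * ρ s a * M.P s a s') * V s' = _
    simp only [Finset.sum_mul]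
    rw [Finset.sum_comm]
    apply Finset.sum_congr rfl; intro s _
    rw [Finset.sum_comm]
  rw [e2]
  simp only [Finset.sum_congr rfl (fun s _ => by rw [e1 s] :
    ∀ s ∈ (univ : Finset S), stateDist M ρ t s * (∑ a, ρ s a * adv M f V s a)
      = stateDist M ρ t s * ((∑ a, ∑ s', ρ s a * (M.P s a s' * (f s a s' + M.γ * V s'))) - V s))]
  simp only [mul_sub, mul_add, Finset.mul_sum, Finset.sum_sub_distrib, Finset.sum_add_distrib]
  ring_nf
  have e3 : ∀ (x : S) (x1 : A) (x2 : S),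
      stateDist M ρ t x * ρ x x1 * M.P x x1 x2 * M.γ * V x2
        = M.γ * stateDist M ρ t x * ρ x x1 * M.P x x1 x2 * V x2 := by
    intros; ring
  simp only [e3]
  ring

end PD
section PD2
variable {S A : Type} [Fintype S] [Fintype A]

lemma telescope_tsum (W : ℕ → ℝ) (hW : Summable fun t => W t - W (t+1))
    (h0 : Filter.Tendsto W Filter.atTop (nhds 0)) :
    ∑' t, (W t - W (t+1)) = W 0 := by
  have h2 := hW.hasSum.tendsto_sum_nat
  have h3 : Filter.Tendsto (fun n => ∑ i ∈ Finset.range n, (W i - W (i+1)))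
      Filter.atTop (nhds (W 0)) := by
    simp only [Finset.sum_range_sub']
    simpa using tendsto_const_nhds.sub h0
  exact tendsto_nhds_unique h2 h3

lemma triple_as_weight (M : MDP S A) (ρ : S → A → ℝ) (f : S → A → S → ℝ) (t : ℕ) :
    (∑ s, ∑ a, ∑ s', stateDist M ρ t s * ρ s a * M.P s a s' * f s a s')
      = ∑ s, stateDist M ρ t s * (∑ a, ∑ s', ρ s a * M.P s a s' * f s a s') := by
  apply Finset.sum_congr rfl; intro s _
  simp only [Finset.mul_sum]
  apply Finset.sum_congr rfl; intro a _
  apply Finset.sum_congr rfl; intro s' _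
  ring

lemma Jret_pd (M : MDP S A) {ρ : S → A → ℝ} (hρ : IsPolicy ρ)
    (f : S → A → S → ℝ) (V : S → ℝ) :
    Jret M ρ f = (∑' t : ℕ, M.γ ^ t * ∑ s, stateDist M ρ t s * ∑ a, ρ s a * adv M f V s a)
      + ∑ s, M.μ s * V s := by
  set W : ℕ → ℝ := fun t => M.γ ^ t * ∑ s, stateDist M ρ t s * V s with hWdef
  have hkey : ∀ t : ℕ,
      M.γ ^ t * (∑ s, ∑ a, ∑ s', stateDist M ρ t s * ρ s a * M.P s a s' * f s a s')
        = M.γ ^ t * (∑ s, stateDist M ρ t s * ∑ a, ρ s a * adv M f V s a)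
          + (W t - W (t+1)) := by
    intro t
    rw [step_identity M hρ f V t]
    simp only [hWdef, pow_succ]
    ring
  have hsumA : Summable (fun t => M.γ ^ t * ∑ s, stateDist M ρ t s *
      ∑ a, ρ s a * adv M f V s a) := summable_stateDist_weight M hρ _
  have hsumJ : Summable (fun t : ℕ => M.γ ^ t *
      ∑ s, ∑ a, ∑ s', stateDist M ρ t s * ρ s a * M.P s a s' * f s a s') := by
    have := summable_stateDist_weight M hρ
      (fun s => ∑ a, ∑ s', ρ s a * M.P s a s' * f s a s')
    apply this.congr
    intro t
    rw [triple_as_weight]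
  have hsumW : Summable (fun t => W t - W (t+1)) := by
    have := hsumJ.sub hsumA
    apply this.congr
    intro t
    rw [hkey t]
    ring
  have hW0 : Filter.Tendsto W Filter.atTop (nhds 0) := by
    apply squeeze_zero_norm (a := fun t => (∑ s, |V s|) * M.γ ^ t)
    · intro t
      rw [hWdef]
      simp only [Real.norm_eq_abs, abs_mul, abs_pow, abs_of_nonneg M.γ_nonneg]
      rw [mul_comm (∑ s, |V s|) (M.γ ^ t)]
      exact mul_le_mul_of_nonneg_left (stateDist_weight_bound M hρ t V)
        (pow_nonneg M.γ_nonneg t)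
    · simpa using (tendsto_pow_atTop_nhds_zero_of_lt_one M.γ_nonneg M.γ_lt_one).const_mul
        (∑ s, |V s|)
  rw [Jret, tsum_congr hkey, Summable.tsum_add hsumA hsumW, telescope_tsum W hsumW hW0]
  congr 1
  simp [hWdef, stateDist]

end PD2
section L1
variable {S A : Type} [Fintype S] [Fintype A]

lemma l1_recursion (M : MDP S A) {π π' : S → A → ℝ} (hπ : IsPolicy π) (hπ' : IsPolicy π') :
    ∀ t, ∑ s, |stateDist M π' t s - stateDist M π t s|
      ≤ ∑ u ∈ Finset.range t, ∑ s, stateDist M π u s * ∑ a, |π' s a - π s a|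
  | 0 => by simp [stateDist]
  | (t+1) => by
    have IH := l1_recursion M hπ hπ' t
    rw [Finset.sum_range_succ]
    have key : ∑ s', |stateDist M π' (t+1) s' - stateDist M π (t+1) s'|
        ≤ (∑ s, |stateDist M π' t s - stateDist M π t s|)
          + ∑ s, stateDist M π t s * ∑ a, |π' s a - π s a| := by
      have h1 : ∀ s' : S, |stateDist M π' (t+1) s' - stateDist M π (t+1) s'|
          ≤ ∑ s, ∑ a,
            |stateDist M π' t s * π' s a - stateDist M π t s * π s a| * M.P s a s' := by
        intro s'
        show |(∑ s, ∑ a, stateDist M π' t s * π' s a * M.P s a s')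
          - ∑ s, ∑ a, stateDist M π t s * π s a * M.P s a s'| ≤ _
        rw [← Finset.sum_sub_distrib]
        refine (Finset.abs_sum_le_sum_abs _ _).trans (Finset.sum_le_sum ?_)
        intro s _
        rw [← Finset.sum_sub_distrib]
        refine (Finset.abs_sum_le_sum_abs _ _).trans (Finset.sum_le_sum ?_)
        intro a _
        rw [← sub_mul, abs_mul, abs_of_nonneg (M.P_nonneg s a s')]
      calc ∑ s', |stateDist M π' (t+1) s' - stateDist M π (t+1) s'|
          ≤ ∑ s', ∑ s, ∑ a,
              |stateDist M π' t s * π' s a - stateDist M π t s * π s a| * M.P s a s' :=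
            Finset.sum_le_sum (fun s' _ => h1 s')
        _ = ∑ s, ∑ a, |stateDist M π' t s * π' s a - stateDist M π t s * π s a| := by
            rw [Finset.sum_comm]
            apply Finset.sum_congr rfl; intro s _
            rw [Finset.sum_comm]
            apply Finset.sum_congr rfl; intro a _
            rw [← Finset.mul_sum, M.P_sum, mul_one]
        _ ≤ ∑ s, ∑ a, (|stateDist M π' t s - stateDist M π t s| * π' s a
              + stateDist M π t s * |π' s a - π s a|) := by
            apply Finset.sum_le_sum; intro s _
            apply Finset.sum_le_sum; intro a _
            have hd : stateDist M π' t s * π' s a - stateDist M π t s * π s a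
                = (stateDist M π' t s - stateDist M π t s) * π' s a
                  + stateDist M π t s * (π' s a - π s a) := by ring
            rw [hd]
            refine (abs_add_le _ _).trans (le_of_eq ?_)
            rw [abs_mul, abs_mul, abs_of_nonneg (hπ'.1 s a),
              abs_of_nonneg (stateDist_nonneg M hπ t s)]
        _ = _ := by
            simp only [Finset.sum_add_distrib]
            congr 1
            · apply Finset.sum_congr rfl; intro s _
              rw [← Finset.mul_sum, hπ'.2 s, mul_one]
            · apply Finset.sum_congr rfl; intro s _
              rw [Finset.mul_sum]
    linarith

lemma tsum_nested_bound (M : MDP S A) (c : ℕ → ℝ) (hc0 : ∀ u, 0 ≤ c u) {C : ℝ}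
    (hC : ∀ u, c u ≤ C) :
    ∑' t : ℕ, M.γ ^ t * ∑ u ∈ Finset.range t, c u
      ≤ (M.γ / (1 - M.γ)) * ∑' u : ℕ, M.γ ^ u * c u := by
  have h1γ := one_sub_γ_pos M
  have hsummc : Summable (fun u => M.γ ^ u * c u) :=
    summable_geom_mul M (C := C) (fun u => by rw [abs_of_nonneg (hc0 u)]; exact hC u)
  apply Real.tsum_le_of_sum_range_le
  · intro t
    exact mul_nonneg (pow_nonneg M.γ_nonneg t) (Finset.sum_nonneg fun u _ => hc0 u)
  intro n
  have hswap : ∑ t ∈ Finset.range n, M.γ ^ t * ∑ u ∈ Finset.range t, c u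
      = ∑ u ∈ Finset.range n, c u * ∑ t ∈ Finset.Ico (u+1) n, M.γ ^ t := by
    induction n with
    | zero => simp
    | succ n ih =>
      rw [Finset.sum_range_succ, ih,
        Finset.sum_range_succ (f := fun u => c u * ∑ t ∈ Finset.Ico (u+1) (n+1), M.γ ^ t)]
      have hcongr : ∀ u ∈ Finset.range n, c u * ∑ t ∈ Finset.Ico (u+1) (n+1), M.γ ^ t
          = c u * ∑ t ∈ Finset.Ico (u+1) n, M.γ ^ t + c u * M.γ ^ n := by
        intro u hu
        rw [Finset.sum_Ico_succ_top (Nat.succ_le_of_lt (Finset.mem_range.1 hu)), mul_add]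
      rw [Finset.sum_congr rfl hcongr, Finset.sum_add_distrib]
      simp only [Finset.Ico_self, Finset.sum_empty, mul_zero, add_zero]
      rw [Finset.mul_sum]
      congr 1
      apply Finset.sum_congr rfl; intro u _
      ring
  rw [hswap]
  have hIco : ∀ u : ℕ, ∑ t ∈ Finset.Ico (u+1) n, M.γ ^ t ≤ M.γ ^ (u+1) * (1/(1-M.γ)) := by
    intro u
    rw [Finset.sum_Ico_eq_sum_range]
    have : ∀ k ∈ Finset.range (n - (u+1)), M.γ ^ (u+1+k) = M.γ ^ (u+1) * M.γ ^ k := by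
      intro k _; rw [pow_add]
    rw [Finset.sum_congr rfl this, ← Finset.mul_sum]
    apply mul_le_mul_of_nonneg_left _ (pow_nonneg M.γ_nonneg _)
    have := Summable.sum_le_tsum (Finset.range (n - (u+1)))
      (fun k _ => pow_nonneg M.γ_nonneg k)
      (summable_geometric_of_lt_one M.γ_nonneg M.γ_lt_one)
    rw [tsum_geometric_of_lt_one M.γ_nonneg M.γ_lt_one] at this
    rwa [one_div]
  calc ∑ u ∈ Finset.range n, c u * ∑ t ∈ Finset.Ico (u+1) n, M.γ ^ t
      ≤ ∑ u ∈ Finset.range n, c u * (M.γ ^ (u+1) * (1/(1-M.γ))) :=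
        Finset.sum_le_sum (fun u _ => mul_le_mul_of_nonneg_left (hIco u) (hc0 u))
    _ = (M.γ / (1-M.γ)) * ∑ u ∈ Finset.range n, M.γ ^ u * c u := by
        rw [Finset.mul_sum]
        apply Finset.sum_congr rfl; intro u _
        rw [pow_succ]
        field_simp
    _ ≤ (M.γ / (1-M.γ)) * ∑' u : ℕ, M.γ ^ u * c u := by
        apply mul_le_mul_of_nonneg_left _ (div_nonneg M.γ_nonneg h1γ.le)
        exact Summable.sum_le_tsum _ (fun u _ =>
          mul_nonneg (pow_nonneg M.γ_nonneg u) (hc0 u)) hsummc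

end L1
section DDiff
variable {S A : Type} [Fintype S] [Fintype A]

lemma dDist_diff_bound (M : MDP S A) {π π' : S → A → ℝ}
    (hπ : IsPolicy π) (hπ' : IsPolicy π') :
    ∑ s, |dDist M π' s - dDist M π s|
      ≤ (M.γ / (1 - M.γ)) * ∑ s, dDist M π s * ∑ a, |π' s a - π s a| := by
  have h1γ := one_sub_γ_pos M
  set g : S → ℝ := fun s => ∑ a, |π' s a - π s a| with hg
  set c : ℕ → ℝ := fun u => ∑ s, stateDist M π u s * g s with hc
  have hg0 : ∀ s, 0 ≤ g s := fun s => Finset.sum_nonneg fun a _ => abs_nonneg _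
  have hc0 : ∀ u, 0 ≤ c u := fun u => Finset.sum_nonneg fun s _ =>
    mul_nonneg (stateDist_nonneg M hπ u s) (hg0 s)
  set C : ℝ := ∑ s, g s with hCdef
  have hC : ∀ u, c u ≤ C := by
    intro u
    have := stateDist_weight_bound M hπ u g
    rw [Finset.sum_congr rfl (fun s _ => abs_of_nonneg (hg0 s))] at this
    exact (le_abs_self _).trans this
  have hC0 : 0 ≤ C := Finset.sum_nonneg fun s _ => hg0 s
  -- summabilities
  have hsumm : ∀ (ρ : S → A → ℝ), IsPolicy ρ → ∀ s : S,
      Summable (fun t => M.γ ^ t * stateDist M ρ t s) := by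
    intro ρ hρ s
    apply summable_geom_mul M (C := 1)
    intro t
    rw [abs_of_nonneg (stateDist_nonneg M hρ t s)]
    exact stateDist_le_one M hρ t s
  have hsumabs : ∀ s : S, Summable (fun t =>
      M.γ ^ t * |stateDist M π' t s - stateDist M π t s|) := by
    intro s
    apply summable_geom_mul M (C := 2)
    intro t
    rw [abs_abs]
    have h1 := stateDist_nonneg M hπ t s
    have h2 := stateDist_le_one M hπ t s
    have h3 := stateDist_nonneg M hπ' t s
    have h4 := stateDist_le_one M hπ' t s
    rw [abs_sub_le_iff]; constructor <;> linarith
  -- pointwise bound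
  have hpt : ∀ s, |dDist M π' s - dDist M π s|
      ≤ (1 - M.γ) * ∑' t : ℕ, M.γ ^ t * |stateDist M π' t s - stateDist M π t s| := by
    intro s
    rw [dDist, dDist, ← mul_sub, abs_mul, abs_of_nonneg h1γ.le]
    apply mul_le_mul_of_nonneg_left _ h1γ.le
    rw [← Summable.tsum_sub (hsumm π' hπ' s) (hsumm π hπ s)]
    have heq : ∀ t : ℕ, M.γ ^ t * stateDist M π' t s - M.γ ^ t * stateDist M π t s
        = M.γ ^ t * (stateDist M π' t s - stateDist M π t s) := fun t => by ring
    rw [tsum_congr heq]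
    have := norm_tsum_le_tsum_norm (f := fun t : ℕ =>
      M.γ ^ t * (stateDist M π' t s - stateDist M π t s)) ?_
    · refine this.trans (le_of_eq (tsum_congr fun t => ?_))
      rw [Real.norm_eq_abs, abs_mul, abs_pow, abs_of_nonneg M.γ_nonneg]
    · apply Summable.congr (hsumabs s)
      intro t
      rw [Real.norm_eq_abs, abs_mul, abs_pow, abs_of_nonneg M.γ_nonneg]
  -- main chain
  have hnested : Summable (fun t : ℕ => M.γ ^ t * ∑ u ∈ Finset.range t, c u) := by
    apply Summable.of_norm_bounded (g := fun t : ℕ => C * ((t : ℝ) * M.γ ^ t))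
      (((summable_pow_mul_geometric_of_norm_lt_one 1 (by
        rw [Real.norm_eq_abs, abs_of_nonneg M.γ_nonneg]; exact M.γ_lt_one)).congr
          (fun n => by rw [pow_one])).mul_left C)
    intro t
    rw [Real.norm_eq_abs, abs_mul, abs_pow, abs_of_nonneg M.γ_nonneg,
      abs_of_nonneg (Finset.sum_nonneg fun u _ => hc0 u)]
    calc M.γ ^ t * ∑ u ∈ Finset.range t, c u ≤ M.γ ^ t * ∑ u ∈ Finset.range t, C :=
          mul_le_mul_of_nonneg_left (Finset.sum_le_sum fun u _ => hC u)
            (pow_nonneg M.γ_nonneg t)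
      _ = C * ((t : ℝ) * M.γ ^ t) := by
          rw [Finset.sum_const, Finset.card_range, nsmul_eq_mul]; ring
  have hl1sum : Summable (fun t : ℕ => M.γ ^ t *
      ∑ s, |stateDist M π' t s - stateDist M π t s|) := by
    apply summable_geom_mul M (C := (2 : ℝ) * (Fintype.card S : ℝ))
    intro t
    rw [abs_of_nonneg (Finset.sum_nonneg fun s _ => abs_nonneg _)]
    calc ∑ s, |stateDist M π' t s - stateDist M π t s| ≤ ∑ s : S, (2:ℝ) := by
          apply Finset.sum_le_sum; intro s _
          have h1 := stateDist_nonneg M hπ t s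
          have h2 := stateDist_le_one M hπ t s
          have h3 := stateDist_nonneg M hπ' t s
          have h4 := stateDist_le_one M hπ' t s
          rw [abs_sub_le_iff]; constructor <;> linarith
      _ = (2:ℝ) * (Fintype.card S : ℝ) := by
          rw [Finset.sum_const, nsmul_eq_mul, Finset.card_univ]; ring
  calc ∑ s, |dDist M π' s - dDist M π s|
      ≤ ∑ s, (1 - M.γ) * ∑' t : ℕ, M.γ ^ t * |stateDist M π' t s - stateDist M π t s| :=
        Finset.sum_le_sum fun s _ => hpt s
    _ = (1 - M.γ) * ∑' t : ℕ, M.γ ^ t * ∑ s, |stateDist M π' t s - stateDist M π t s| := by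
        rw [← Finset.mul_sum]
        congr 1
        rw [← Summable.tsum_finsetSum (fun s _ => hsumabs s)]
        apply tsum_congr
        intro t
        rw [Finset.mul_sum]
    _ ≤ (1 - M.γ) * ∑' t : ℕ, M.γ ^ t * ∑ u ∈ Finset.range t, c u := by
        apply mul_le_mul_of_nonneg_left _ h1γ.le
        apply Summable.tsum_le_tsum _ hl1sum hnested
        intro t
        exact mul_le_mul_of_nonneg_left (l1_recursion M hπ hπ' t) (pow_nonneg M.γ_nonneg t)
    _ ≤ (1 - M.γ) * ((M.γ / (1 - M.γ)) * ∑' u : ℕ, M.γ ^ u * c u) :=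
        mul_le_mul_of_nonneg_left (tsum_nested_bound M c hc0 hC) h1γ.le
    _ = (M.γ / (1 - M.γ)) * ∑ s, dDist M π s * g s := by
        rw [hc, tsum_dDist_eq M hπ g]
        field_simp
end DDiff
section Final
variable {S A : Type} [Fintype S] [Fintype A]

lemma jensen_sqrt (d k : S → ℝ) (hd : ∀ s, 0 ≤ d s) (hk : ∀ s, 0 ≤ k s)
    (hd1 : ∑ s, d s = 1) :
    ∑ s, d s * Real.sqrt (k s) ≤ Real.sqrt (∑ s, d s * k s) := by
  have he : ∀ s ∈ (univ : Finset S), d s * Real.sqrt (k s)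
      = Real.sqrt (d s) * Real.sqrt (d s * k s) := by
    intro s _
    rw [Real.sqrt_mul (hd s), ← mul_assoc, Real.mul_self_sqrt (hd s)]
  rw [Finset.sum_congr rfl he]
  have := Real.sum_sqrt_mul_sqrt_le (univ : Finset S) (f := d)
    (g := fun s => d s * k s) hd (fun s => mul_nonneg (hd s) (hk s))
  rwa [hd1, Real.sqrt_one, one_mul] at this

theorem cpo_performance_difference_bound' {S A : Type} [Fintype S] [Fintype A]
    [Nonempty S] [Nonempty A] (M : MDP S A) (f : S → A → S → ℝ)
    (π π' : S → A → ℝ) (hπ : IsPolicy π) (hπ' : IsPolicy π')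
    (habs : ∀ s a, π s a = 0 → π' s a = 0)
    (V : S → ℝ) (hV : IsValue M π f V) (δ ε : ℝ)
    (hδ : δ = ∑ s, dDist M π s * klDiv (π' s) (π s))
    (hε : ε = (Finset.univ.sup' Finset.univ_nonempty
      fun s : S => |∑ a, π' s a * adv M f V s a|)) :
    Jret M π' f - Jret M π f ≤
      (1 / (1 - M.γ)) * ((∑ s, dDist M π s * ∑ a, π' s a * adv M f V s a)
        + M.γ * ε * Real.sqrt (2 * δ) / (1 - M.γ)) ∧
    Jret M π' f - Jret M π f ≥
      (1 / (1 - M.γ)) * ((∑ s, dDist M π s * ∑ a, π' s a * adv M f V s a)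
        - M.γ * ε * Real.sqrt (2 * δ) / (1 - M.γ)) := by
  have h1γ := one_sub_γ_pos M
  set Abar : S → ℝ := fun s => ∑ a, π' s a * adv M f V s a with hAbar
  -- performance difference identity
  have hzero : ∀ s, (∑ a, π s a * adv M f V s a) = 0 := by
    intro s
    simp only [adv, mul_sub, Finset.sum_sub_distrib]
    rw [← Finset.sum_mul, hπ.2 s, one_mul, ← hV s, sub_self]
  have hJπ : Jret M π f = ∑ s, M.μ s * V s := by
    rw [Jret_pd M hπ f V]
    rw [tsum_congr (fun t => by
      rw [Finset.sum_congr rfl (fun s _ => by rw [hzero s, mul_zero]), Finset.sum_const,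
        smul_zero, mul_zero] : ∀ t : ℕ,
      M.γ ^ t * ∑ s, stateDist M π t s * ∑ a, π s a * adv M f V s a = 0)]
    rw [tsum_zero, zero_add]
  have hdiff : Jret M π' f - Jret M π f = (1 / (1 - M.γ)) * ∑ s, dDist M π' s * Abar s := by
    rw [Jret_pd M hπ' f V, hJπ, add_sub_cancel_right, tsum_dDist_eq M hπ' Abar]
  -- error term
  set R : ℝ := ∑ s, (dDist M π' s - dDist M π s) * Abar s with hR
  have hsplit : ∑ s, dDist M π' s * Abar s = (∑ s, dDist M π s * Abar s) + R := by
    rw [hR, ← Finset.sum_add_distrib]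
    apply Finset.sum_congr rfl; intro s _; ring
  have hεbound : ∀ s, |Abar s| ≤ ε := by
    intro s
    rw [hε]
    exact Finset.le_sup' (fun s : S => |∑ a, π' s a * adv M f V s a|) (mem_univ s)
  have hε0 : 0 ≤ ε := le_trans (abs_nonneg _) (hεbound (Classical.arbitrary S))
  -- Pinsker per state
  have hkl : ∀ s, 0 ≤ klDiv (π' s) (π s) ∧
      ∑ a, |π' s a - π s a| ≤ Real.sqrt (2 * klDiv (π' s) (π s)) :=
    fun s => pinsker_fin (π' s) (π s) (hπ'.1 s) (hπ.1 s) (hπ'.2 s) (hπ.2 s) (habs s)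
  -- bound on ∑ |d' - d|
  have hdd : ∑ s, |dDist M π' s - dDist M π s| ≤ (M.γ / (1 - M.γ)) * Real.sqrt (2 * δ) := by
    calc ∑ s, |dDist M π' s - dDist M π s|
        ≤ (M.γ / (1 - M.γ)) * ∑ s, dDist M π s * ∑ a, |π' s a - π s a| :=
          dDist_diff_bound M hπ hπ'
      _ ≤ (M.γ / (1 - M.γ)) * Real.sqrt (2 * δ) := by
          apply mul_le_mul_of_nonneg_left _ (div_nonneg M.γ_nonneg h1γ.le)
          calc ∑ s, dDist M π s * ∑ a, |π' s a - π s a|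
              ≤ ∑ s, dDist M π s * Real.sqrt (2 * klDiv (π' s) (π s)) :=
                Finset.sum_le_sum fun s _ => mul_le_mul_of_nonneg_left (hkl s).2
                  (dDist_nonneg M hπ s)
            _ ≤ Real.sqrt (∑ s, dDist M π s * (2 * klDiv (π' s) (π s))) :=
                jensen_sqrt _ _ (fun s => dDist_nonneg M hπ s)
                  (fun s => by have := (hkl s).1; linarith) (dDist_sum M hπ)
            _ = Real.sqrt (2 * δ) := by
                congr 1
                rw [hδ, Finset.mul_sum]
                apply Finset.sum_congr rfl; intro s _; ring
  have hRbound : |R| ≤ M.γ * ε * Real.sqrt (2 * δ) / (1 - M.γ) := by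
    calc |R| ≤ ∑ s, |(dDist M π' s - dDist M π s) * Abar s| := Finset.abs_sum_le_sum_abs _ _
      _ ≤ ∑ s, |dDist M π' s - dDist M π s| * ε := by
          apply Finset.sum_le_sum; intro s _
          rw [abs_mul]
          exact mul_le_mul_of_nonneg_left (hεbound s) (abs_nonneg _)
      _ = (∑ s, |dDist M π' s - dDist M π s|) * ε := by rw [Finset.sum_mul]
      _ ≤ ((M.γ / (1 - M.γ)) * Real.sqrt (2 * δ)) * ε :=
          mul_le_mul_of_nonneg_right hdd hε0
      _ = M.γ * ε * Real.sqrt (2 * δ) / (1 - M.γ) := by field_simp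
  rw [hdiff, hsplit]
  have hpos : 0 < 1 / (1 - M.γ) := by positivity
  constructor
  · apply mul_le_mul_of_nonneg_left _ hpos.le
    have := (abs_le.1 hRbound).2
    linarith
  · apply mul_le_mul_of_nonneg_left _ hpos.le
    have := (abs_le.1 hRbound).1
    linarith

end Final

/-- Lemma 4 (CPO performance-difference bound, finite-state version). -/
theorem cpo_performance_difference_bound {S A : Type} [Fintype S] [Fintype A]
    [Nonempty S] [Nonempty A] (M : MDP S A) (f : S → A → S → ℝ)
    (π π' : S → A → ℝ) (hπ : IsPolicy π) (hπ' : IsPolicy π')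
    (habs : ∀ s a, π s a = 0 → π' s a = 0)
    (V : S → ℝ) (hV : IsValue M π f V) (δ ε : ℝ)
    (hδ : δ = ∑ s, dDist M π s * klDiv (π' s) (π s))
    (hε : ε = (Finset.univ.sup' Finset.univ_nonempty
      fun s : S => |∑ a, π' s a * adv M f V s a|)) :
    Jret M π' f - Jret M π f ≤
      (1 / (1 - M.γ)) * ((∑ s, dDist M π s * ∑ a, π' s a * adv M f V s a)
        + M.γ * ε * Real.sqrt (2 * δ) / (1 - M.γ)) ∧
    Jret M π' f - Jret M π f ≥
      (1 / (1 - M.γ)) * ((∑ s, dDist M π s * ∑ a, π' s a * adv M f V s a)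
        - M.γ * ε * Real.sqrt (2 * δ) / (1 - M.γ)) := by
  exact cpo_performance_difference_bound' M f π π' hπ hπ' habs V hV δ ε hδ hε
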